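/- Let E = ℝ^n with the Euclidean inner product and let F : E → E be continuous and ε-strongly monotone for some ε > 0, i.e., ⟨x − y, F(x) − F(y)⟩ ≥ ε‖x − y‖² for all x, y ∈ E. Then F has exactly one zero: there exists a unique x* ∈ E with F(x*) = 0. -/

import Mathlib

open scoped RealInnerProductSpace

/-- A continuous strictly increasing (strongly monotone) scalar map has a zero. -/
lemma scalar_exists_zero (f : ℝ → ℝ) (hf : Continuous f) (ε : ℝ) (hε : 0 < ε)
    (h : ∀ s t : ℝ, ε * (s - t) ^ 2 ≤ (s - t) * (f s - f t)) : ∃ t, f t = 0 := by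
  set b : ℝ := |f 0| / ε + 1 with hb
  have hb0 : 0 < b := by positivity
  have hfb : 0 ≤ f b := by
    have := h b 0
    have h1 : ε * b ≤ f b - f 0 := by nlinarith
    have h2 : ε * b = |f 0| + ε := by
      rw [hb, mul_add, mul_one, mul_comm ε (|f 0| / ε), div_mul_cancel₀ _ (ne_of_gt hε)]
    have := abs_nonneg (f 0); have := le_abs_self (f 0); have := neg_abs_le (f 0)
    nlinarith
  have hfa : f (-b) ≤ 0 := by
    have := h 0 (-b)
    have h1 : ε * b ≤ f 0 - f (-b) := by nlinarith
    have h2 : ε * b = |f 0| + ε := by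
      rw [hb, mul_add, mul_one, mul_comm ε (|f 0| / ε), div_mul_cancel₀ _ (ne_of_gt hε)]
    have := le_abs_self (f 0); have := neg_abs_le (f 0)
    nlinarith
  have hab : (-b : ℝ) ≤ b := by linarith
  have := intermediate_value_Icc hab hf.continuousOn
  have h0 : (0 : ℝ) ∈ Set.Icc (f (-b)) (f b) := ⟨hfa, hfb⟩
  obtain ⟨t, _, ht⟩ := this h0
  exact ⟨t, ht⟩

lemma aux_exists : ∀ (n : ℕ) (E : Type) [NormedAddCommGroup E] [InnerProductSpace ℝ E]
    [FiniteDimensional ℝ E], Module.finrank ℝ E = n → ∀ (F : E → E), Continuous F →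
    ∀ ε : ℝ, 0 < ε → (∀ x y, ε * ‖x - y‖ ^ 2 ≤ ⟪x - y, F x - F y⟫) → ∃ x, F x = 0 := by
  intro n
  induction n with
  | zero =>
    intro E _ _ _ hrank F hcont ε hε hmono
    have : Subsingleton E := Module.finrank_zero_iff.mp hrank
    exact ⟨0, Subsingleton.elim _ _⟩
  | succ n ih =>
    intro E _ _ _ hrank F hcont ε hε hmono
    -- pick a unit vector e
    have hnt : Nontrivial E := by
      apply Module.nontrivial_of_finrank_pos (R := ℝ)
      omega
    obtain ⟨x0, hx0⟩ := exists_ne (0 : E)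
    set e : E := ‖x0‖⁻¹ • x0 with he
    have hx0n : ‖x0‖ ≠ 0 := norm_ne_zero_iff.mpr hx0
    have hene : ‖e‖ = 1 := by
      rw [he, norm_smul, norm_inv, norm_norm]
      field_simp
    have he0 : e ≠ 0 := by intro h; rw [h] at hene; simp at hene
    set K : Submodule ℝ E := (ℝ ∙ e)ᗮ with hK
    have hKrank : Module.finrank ℝ K = n := by
      have h1 : Module.finrank ℝ (ℝ ∙ e) = 1 := finrank_span_singleton he0
      have h2 := Submodule.finrank_add_finrank_orthogonal (K := (ℝ ∙ e)) (𝕜 := ℝ)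
      rw [h1, hrank] at h2
      show Module.finrank ℝ ((ℝ ∙ e)ᗮ : Submodule ℝ E) = n
      omega
    have heK : e ∈ Kᗮ := by
      rw [hK, Submodule.orthogonal_orthogonal]
      exact Submodule.mem_span_singleton_self e
    -- scalar slice functions
    set f : K → ℝ → ℝ := fun u t => ⟪e, F ((u : E) + t • e)⟫ with hf
    have hfc : ∀ u : K, Continuous (f u) := by
      intro u
      apply Continuous.inner continuous_const
      exact hcont.comp (continuous_const.add (continuous_id.smul continuous_const))
    have hfmono : ∀ (u : K) (s t : ℝ), ε * (s - t) ^ 2 ≤ (s - t) * (f u s - f u t) := by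
      intro u s t
      have := hmono ((u : E) + s • e) ((u : E) + t • e)
      have hxy : ((u : E) + s • e) - ((u : E) + t • e) = (s - t) • e := by
        rw [sub_smul]; abel
      rw [hxy] at this
      rw [norm_smul] at this
      simp only [hene, mul_one, Real.norm_eq_abs] at this
      rw [real_inner_smul_left] at this
      calc ε * (s - t) ^ 2 = ε * |s - t| ^ 2 := by rw [sq_abs]
        _ ≤ (s - t) * ⟪e, F ((u:E) + s • e) - F ((u:E) + t • e)⟫ := this
        _ = (s - t) * (f u s - f u t) := by rw [inner_sub_right]
    -- τ u : the unique zero of f u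
    have hτex : ∀ u : K, ∃ t, f u t = 0 := fun u =>
      scalar_exists_zero (f u) (hfc u) ε hε (hfmono u)
    choose τ hτ using hτex
    -- continuity bound for τ
    have hτbound : ∀ u v : K, ε * |τ v - τ u| ≤ |f v (τ u)| := by
      intro u v
      have h1 := hfmono v (τ v) (τ u)
      rw [hτ v] at h1
      rcases eq_or_ne (τ v) (τ u) with h | h
      · rw [h]; simp
      · have habs : 0 < |τ v - τ u| := abs_pos.mpr (sub_ne_zero.mpr h)
        have h2 : (τ v - τ u) * (0 - f v (τ u)) ≤ |τ v - τ u| * |f v (τ u)| := by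
          calc (τ v - τ u) * (0 - f v (τ u)) ≤ |(τ v - τ u) * (0 - f v (τ u))| := le_abs_self _
            _ = |τ v - τ u| * |0 - f v (τ u)| := abs_mul _ _
            _ = |τ v - τ u| * |f v (τ u)| := by rw [zero_sub, abs_neg]
        have h3 : ε * |τ v - τ u| ^ 2 ≤ |τ v - τ u| * |f v (τ u)| := by
          calc ε * |τ v - τ u| ^ 2 = ε * (τ v - τ u) ^ 2 := by rw [sq_abs]
            _ ≤ _ := le_trans h1 h2
        nlinarith
    have hτcont : Continuous τ := by
      rw [continuous_iff_continuousAt]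
      intro u
      have hg : Continuous (fun v : K => |f v (τ u)|) := by
        apply Continuous.abs
        apply Continuous.inner continuous_const
        exact hcont.comp (continuous_subtype_val.add continuous_const)
      have hgu : |f u (τ u)| = 0 := by rw [hτ u]; simp
      have htend : Filter.Tendsto (fun v : K => |τ v - τ u|) (nhds u) (nhds 0) := by
        apply squeeze_zero (fun v => abs_nonneg _) (fun v => ?_)
        · have : Filter.Tendsto (fun v : K => |f v (τ u)| / ε) (nhds u) (nhds 0) := by
            have := (hg.tendsto u).div_const ε
            rwa [hgu, zero_div] at this
          exact this
        · have := hτbound u v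
          rw [le_div_iff₀ hε]
          linarith [hτbound u v]
      have : Filter.Tendsto (fun v : K => τ v - τ u) (nhds u) (nhds 0) :=
        (tendsto_zero_iff_abs_tendsto_zero _).mpr htend
      have := this.add_const (τ u)
      simp only [sub_add_cancel, zero_add] at this
      exact this
    -- the reduced map
    set x : K → E := fun u => (u : E) + τ u • e with hx
    have hxcont : Continuous x := by
      apply Continuous.add continuous_subtype_val
      exact hτcont.smul continuous_const
    set G : K → K := fun u => K.orthogonalProjectionOnto (F (x u)) with hG
    have hGcont : Continuous G := by
      exact K.orthogonalProjectionOnto.continuous.comp (hcont.comp hxcont)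
    -- key inner product identities
    have hker : ∀ k : E, k ∈ K → ∀ w : E,
        ⟪k, (K.orthogonalProjectionOnto w : E)⟫ = ⟪k, w⟫ := by
      intro k hk w
      have hmem : w - K.orthogonalProjectionOnto w ∈ Kᗮ := K.sub_starProjection_mem_orthogonal w
      have hexp : ⟪k, w - (K.orthogonalProjectionOnto w : E)⟫ = 0 := hmem k hk
      rw [inner_sub_right] at hexp
      linarith
    have hfx : ∀ u : K, ⟪e, F (x u)⟫ = 0 := fun u => hτ u
    have hGmono : ∀ u v : K, ε * ‖u - v‖ ^ 2 ≤ ⟪u - v, G u - G v⟫ := by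
      intro u v
      have hsub : ((u - v : K) : E) = (u : E) - v := rfl
      have hinner : ⟪u - v, G u - G v⟫ = ⟪(u : E) - (v : E), F (x u) - F (x v)⟫ := by
        rw [Submodule.coe_inner]
        have : ((G u - G v : K) : E) =
            (K.orthogonalProjectionOnto (F (x u) - F (x v)) : E) := by
          simp [hG, map_sub]
        rw [hsub, this]
        exact hker _ (Submodule.sub_mem K u.2 v.2) _
      have hdiff : x u - x v = ((u : E) - v) + (τ u - τ v) • e := by
        simp only [hx, sub_smul]; abel
      have horth : ⟪(u : E) - v, (τ u - τ v) • e⟫ = 0 := by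
        have h0 : ⟪(u:E) - v, e⟫ = 0 := heK _ (Submodule.sub_mem K u.2 v.2)
        rw [real_inner_smul_right, h0, mul_zero]
      have hnorm : ‖(u:E) - v‖ ^ 2 ≤ ‖x u - x v‖ ^ 2 := by
        rw [hdiff, norm_add_sq_real, horth]
        nlinarith [sq_nonneg ‖(τ u - τ v) • e‖, norm_nonneg ((u:E) - v)]
      have hmain := hmono (x u) (x v)
      have hzero : ⟪e, F (x u) - F (x v)⟫ = 0 := by
        rw [inner_sub_right, hfx u, hfx v, sub_zero]
      have hsplit : ⟪x u - x v, F (x u) - F (x v)⟫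
          = ⟪(u:E) - v, F (x u) - F (x v)⟫ := by
        rw [hdiff, inner_add_left, real_inner_smul_left, hzero, mul_zero, add_zero]
      have hnK : ‖u - v‖ = ‖(u:E) - v‖ := by rw [← hsub]; exact rfl
      rw [hinner, hnK]
      calc ε * ‖(u:E) - v‖ ^ 2 ≤ ε * ‖x u - x v‖ ^ 2 := by nlinarith
        _ ≤ ⟪x u - x v, F (x u) - F (x v)⟫ := hmain
        _ = _ := hsplit
    obtain ⟨u, hu⟩ := ih K hKrank G hGcont ε hε hGmono
    refine ⟨x u, ?_⟩
    -- F (x u) ∈ Kᗮ = ℝ ∙ e and ⟪e, F (x u)⟫ = 0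
    have hmemo : F (x u) ∈ Kᗮ := by
      have : K.orthogonalProjectionOnto (F (x u)) = 0 := hu
      rwa [Submodule.orthogonalProjectionOnto_eq_zero_iff] at this
    rw [hK, Submodule.orthogonal_orthogonal] at hmemo
    obtain ⟨c, hc⟩ := Submodule.mem_span_singleton.mp hmemo
    have h0 := hfx u
    rw [← hc, real_inner_smul_right, real_inner_self_eq_norm_sq, hene] at h0
    have hc0 : c = 0 := by simpa using h0
    rw [← hc, hc0, zero_smul]

theorem strongly_monotone_unique_zero
    (n : ℕ) (F : EuclideanSpace ℝ (Fin n) → EuclideanSpace ℝ (Fin n))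
    (hcont : Continuous F) (ε : ℝ) (hε : 0 < ε)
    (hmono : ∀ x y, ε * ‖x - y‖ ^ 2 ≤ ⟪x - y, F x - F y⟫) :
    ∃! xstar : EuclideanSpace ℝ (Fin n), F xstar = 0 := by
  obtain ⟨x, hx⟩ := aux_exists n (EuclideanSpace ℝ (Fin n)) (finrank_euclideanSpace_fin) F hcont ε hε hmono
  refine ⟨x, hx, fun y hy => ?_⟩
  have := hmono y x
  rw [hy, hx, sub_self, inner_zero_right] at this
  have h2 : ‖y - x‖ ^ 2 ≤ 0 := by nlinarith
  have : ‖y - x‖ = 0 := by nlinarith [sq_nonneg ‖y - x‖, norm_nonneg (y - x)]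
  rw [norm_eq_zero, sub_eq_zero] at this
  exact this
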